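/- For two unit contact normals u ≠ ±v, set γ as in the angular feasibility condition, r₀ = (u+v)/‖u+v‖, and let (w_i) be any minimal alternating sequence from {u,v}. Define r_i = r₀ Γ(w_1)⋯Γ(w_i). Then ⟨r_i, r₀⟩ = cos(2iγ) for all i. -/

import Mathlib

open Matrix

noncomputable def kin {n : ℕ} (M : Matrix (Fin n) (Fin n) ℝ)
    (x y : Matrix (Fin 1) (Fin n) ℝ) : ℝ :=
  (x * M⁻¹ * yᵀ) 0 0

noncomputable def Gam {n : ℕ} (M : Matrix (Fin n) (Fin n) ℝ)
    (u : Matrix (Fin 1) (Fin n) ℝ) : Matrix (Fin n) (Fin n) ℝ :=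
  1 - (2 / kin M u u) • (M⁻¹ * uᵀ * u)

section aux
variable {n : ℕ} {M : Matrix (Fin n) (Fin n) ℝ}

lemma one_by_one_mul (A B : Matrix (Fin 1) (Fin 1) ℝ) : (A * B) 0 0 = A 0 0 * B 0 0 := by
  simp [Matrix.mul_apply]

lemma kin_pos (hM : M.PosDef) {x : Matrix (Fin 1) (Fin n) ℝ} (hx : x ≠ 0) :
    0 < kin M x x := by
  have hx0 : x 0 ≠ 0 := by
    intro h
    apply hx
    funext i j
    have : i = 0 := Subsingleton.elim _ _
    subst this
    simpa using congrFun h j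
  have h := hM.inv.dotProduct_mulVec_pos hx0
  have heq : kin M x x = dotProduct (star (x 0)) (M⁻¹ *ᵥ (x 0)) := by
    simp only [kin, Matrix.mul_apply, dotProduct, Matrix.mulVec, star_trivial,
      Matrix.transpose_apply, Finset.sum_mul, Finset.mul_sum, dotProduct]
    rw [Finset.sum_comm]
    apply Finset.sum_congr rfl
    intro j _
    apply Finset.sum_congr rfl
    intro k _
    ring
  rw [heq]; exact h

lemma kin_symm (hM : M.PosDef) (x y : Matrix (Fin 1) (Fin n) ℝ) :
    kin M x y = kin M y x := by
  have hMt : Mᵀ = M := hM.isHermitian.eq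
  have hinv : (M⁻¹)ᵀ = M⁻¹ := by rw [Matrix.transpose_nonsing_inv, hMt]
  have h : (x * M⁻¹ * yᵀ)ᵀ = y * M⁻¹ * xᵀ := by
    rw [Matrix.transpose_mul, Matrix.transpose_mul, Matrix.transpose_transpose, hinv,
      Matrix.mul_assoc]
  calc kin M x y = (x * M⁻¹ * yᵀ)ᵀ 0 0 := rfl
    _ = kin M y x := by rw [h]; rfl

lemma kin_add_left (x y z : Matrix (Fin 1) (Fin n) ℝ) :
    kin M (x + y) z = kin M x z + kin M y z := by
  simp [kin, Matrix.add_mul]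

lemma kin_neg_left (x z : Matrix (Fin 1) (Fin n) ℝ) :
    kin M (-x) z = -kin M x z := by
  simp [kin, Matrix.neg_mul]

lemma kin_neg_right (x z : Matrix (Fin 1) (Fin n) ℝ) :
    kin M x (-z) = -kin M x z := by
  simp [kin, Matrix.transpose_neg, Matrix.mul_neg]

lemma kin_smul_left (c : ℝ) (x z : Matrix (Fin 1) (Fin n) ℝ) :
    kin M (c • x) z = c * kin M x z := by
  simp [kin, Matrix.smul_mul]

lemma kin_gam (x y w : Matrix (Fin 1) (Fin n) ℝ) (hww : kin M w w = 1) :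
    kin M (x * Gam M w) y = kin M x y - 2 * (kin M x w * kin M w y) := by
  have hassoc : x * (M⁻¹ * wᵀ * w) * M⁻¹ * yᵀ = (x * M⁻¹ * wᵀ) * (w * M⁻¹ * yᵀ) := by
    simp only [Matrix.mul_assoc]
  simp only [kin, Gam, hww, div_one, Matrix.mul_sub, Matrix.mul_one, Matrix.mul_smul,
    Matrix.sub_mul, Matrix.smul_mul, Matrix.sub_apply, Matrix.smul_apply, hassoc,
    one_by_one_mul, smul_eq_mul]
  rw [show (w * M⁻¹ * wᵀ) 0 0 = (1:ℝ) from hww]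
  ring

end aux

theorem reflected_r_angle {n : ℕ}
    (M : Matrix (Fin n) (Fin n) ℝ) (hM : M.PosDef)
    (u v : Matrix (Fin 1) (Fin n) ℝ)
    (huu : kin M u u = 1) (hvv : kin M v v = 1)
    (huv : u ≠ v) (huv' : u ≠ -v)
    (r0 : Matrix (Fin 1) (Fin n) ℝ)
    (hr0 : r0 = (Real.sqrt (kin M (u + v) (u + v)))⁻¹ • (u + v))
    (γ : ℝ) (hγ : γ = Real.arcsin (kin M r0 u))
    (w : ℕ → Matrix (Fin 1) (Fin n) ℝ)
    (hw : ∀ i, w i ∈ ({u, v} : Set (Matrix (Fin 1) (Fin n) ℝ)))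
    (halt : ∀ i, w (i + 1) ≠ w i)
    (r : ℕ → Matrix (Fin 1) (Fin n) ℝ)
    (hrzero : r 0 = r0)
    (hrec : ∀ i, r (i + 1) = r i * Gam M (w (i + 1))) :
    ∀ i, kin M (r i) r0 = Real.cos (2 * i * γ) := by
  set c := kin M u v with hc
  have hvu : kin M v u = c := kin_symm hM v u
  -- nonvanishing sums/differences
  have huv0 : u + v ≠ 0 := by
    intro h
    exact huv' (by linear_combination (norm := module) h)
  have huv1 : u - v ≠ 0 := sub_ne_zero.mpr huv
  -- kin of sums
  have hsum : kin M (u + v) (u + v) = 2 + 2 * c := by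
    rw [kin_add_left, kin_symm hM u (u+v), kin_symm hM v (u+v), kin_add_left, kin_add_left,
      huu, hvv, hvu, ← hc]
    ring
  have hdiff : kin M (u - v) (u - v) = 2 - 2 * c := by
    rw [sub_eq_add_neg, kin_add_left, kin_symm hM u (u + -v), kin_symm hM (-v) (u + -v),
      kin_add_left, kin_add_left, kin_neg_left, kin_neg_left, kin_neg_right,
      kin_neg_right, huu, hvv, hvu, ← hc]
    ring
  have hpos2 : 0 < 2 + 2 * c := hsum ▸ kin_pos hM huv0
  have hlt : c < 1 := by
    have := hdiff ▸ kin_pos hM huv1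
    linarith
  set N := Real.sqrt (2 + 2 * c) with hNdef
  have hr0' : r0 = N⁻¹ • (u + v) := by rw [hr0, hsum]
  have hN : 0 < N := Real.sqrt_pos.mpr hpos2
  have hN2 : N ^ 2 = 2 + 2 * c := Real.sq_sqrt hpos2.le
  have hNle : N ≤ 2 := by nlinarith
  have hNN : N * N = 2 + 2 * c := Real.mul_self_sqrt hpos2.le
  have hr0u : kin M r0 u = N / 2 := by
    rw [hr0', kin_smul_left, kin_add_left, huu, hvu]
    rw [show (1:ℝ) + c = N * N / 2 by linarith]
    field_simp
  have hr0v : kin M r0 v = N / 2 := by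
    rw [hr0', kin_smul_left, kin_add_left, hvv, ← hc]
    rw [show c + 1 = N * N / 2 by linarith]
    field_simp
  have hs : Real.sin γ = N / 2 := by
    rw [hγ, hr0u, Real.sin_arcsin (by linarith) (by linarith)]
  have hcos2 : Real.cos (2 * γ) = -c := by
    have h1 := Real.cos_two_mul γ
    have h2 := Real.sin_sq_add_cos_sq γ
    have hsin2 : Real.sin γ ^ 2 = (1 + c) / 2 := by
      rw [hs, div_pow, show N ^ 2 = N * N by ring, hNN]
      ring
    linarith
  -- the key invariant
  have key : ∀ i : ℕ,
      (kin M (r i) u = Real.sin ((2*(i:ℝ)+1)*γ) ∧ kin M (r i) v = -Real.sin ((2*(i:ℝ)-1)*γ)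
        ∧ w (i+1) = u) ∨
      (kin M (r i) v = Real.sin ((2*(i:ℝ)+1)*γ) ∧ kin M (r i) u = -Real.sin ((2*(i:ℝ)-1)*γ)
        ∧ w (i+1) = v) := by
    intro i
    induction i with
    | zero =>
      have e1 : Real.sin ((2*((0:ℕ):ℝ)+1)*γ) = N / 2 := by
        rw [show (2*((0:ℕ):ℝ)+1)*γ = γ by push_cast; ring, hs]
      have e2 : -Real.sin ((2*((0:ℕ):ℝ)-1)*γ) = N / 2 := by
        rw [show (2*((0:ℕ):ℝ)-1)*γ = -γ by push_cast; ring, Real.sin_neg, neg_neg, hs]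
      have ha : kin M (r 0) u = N / 2 := by rw [hrzero, hr0u]
      have hb : kin M (r 0) v = N / 2 := by rw [hrzero, hr0v]
      rcases hw 1 with h1 | h1
      · exact Or.inl ⟨ha.trans e1.symm, hb.trans e2.symm, h1⟩
      · exact Or.inr ⟨hb.trans e1.symm, ha.trans e2.symm, h1⟩
    | succ i ih =>
      have trig : ∀ x : ℝ, Real.sin (x + 2*γ) = 2 * Real.sin x * Real.cos (2*γ) - Real.sin (x - 2*γ) := by
        intro x
        rw [Real.sin_add, Real.sin_sub]
        ring
      rcases ih with ⟨ha, hb, hwi⟩ | ⟨hb, ha, hwi⟩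
      · -- reflect by u, go to second disjunct
        have hru : kin M (r (i+1)) u = -Real.sin ((2*((i:ℝ)+1)-1)*γ) := by
          rw [hrec i, hwi, kin_gam _ _ _ huu, huu, ha]
          rw [show (2*((i:ℝ)+1)-1)*γ = (2*(i:ℝ)+1)*γ by ring]
          ring
        have hrv : kin M (r (i+1)) v = Real.sin ((2*((i:ℝ)+1)+1)*γ) := by
          rw [hrec i, hwi, kin_gam _ _ _ huu, ha, hb, ← hc]
          have h1 : (2*((i:ℝ)+1)+1)*γ = (2*(i:ℝ)+1)*γ + 2*γ := by ring
          have h2 : (2*(i:ℝ)-1)*γ = (2*(i:ℝ)+1)*γ - 2*γ := by ring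
          rw [h1, trig, ← h2, hcos2]
          ring
        have hwv : w (i+2) = v := by
          rcases hw (i+2) with h | h
          · exact absurd (h.trans hwi.symm) (halt (i+1))
          · exact h
        exact Or.inr ⟨by push_cast; exact hrv, by push_cast; exact hru, hwv⟩
      · -- reflect by v, go to first disjunct
        have hrv : kin M (r (i+1)) v = -Real.sin ((2*((i:ℝ)+1)-1)*γ) := by
          rw [hrec i, hwi, kin_gam _ _ _ hvv, hvv, hb]
          rw [show (2*((i:ℝ)+1)-1)*γ = (2*(i:ℝ)+1)*γ by ring]
          ring
        have hru : kin M (r (i+1)) u = Real.sin ((2*((i:ℝ)+1)+1)*γ) := by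
          rw [hrec i, hwi, kin_gam _ _ _ hvv, hb, ha, hvu]
          have h1 : (2*((i:ℝ)+1)+1)*γ = (2*(i:ℝ)+1)*γ + 2*γ := by ring
          have h2 : (2*(i:ℝ)-1)*γ = (2*(i:ℝ)+1)*γ - 2*γ := by ring
          rw [h1, trig, ← h2, hcos2]
          ring
        have hwu : w (i+2) = u := by
          rcases hw (i+2) with h | h
          · exact h
          · exact absurd (h.trans hwi.symm) (halt (i+1))
        exact Or.inl ⟨by push_cast; exact hru, by push_cast; exact hrv, hwu⟩
  -- conclude
  intro i
  have habsum : kin M (r i) u + kin M (r i) v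
      = Real.sin ((2*(i:ℝ)+1)*γ) - Real.sin ((2*(i:ℝ)-1)*γ) := by
    rcases key i with ⟨ha, hb, -⟩ | ⟨hb, ha, -⟩ <;> rw [ha, hb] <;> ring
  have hexp : kin M (r i) r0 = N⁻¹ * (kin M (r i) u + kin M (r i) v) := by
    rw [kin_symm hM (r i) r0, hr0', kin_smul_left, kin_add_left,
      kin_symm hM u (r i), kin_symm hM v (r i)]
  rw [hexp, habsum]
  have trig2 : Real.sin ((2*(i:ℝ)+1)*γ) - Real.sin ((2*(i:ℝ)-1)*γ)
      = 2 * Real.cos (2*(i:ℝ)*γ) * Real.sin γ := by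
    have h1 : (2*(i:ℝ)+1)*γ = 2*(i:ℝ)*γ + γ := by ring
    have h2 : (2*(i:ℝ)-1)*γ = 2*(i:ℝ)*γ - γ := by ring
    rw [h1, h2, Real.sin_add, Real.sin_sub]
    ring
  rw [trig2, hs]
  field_simp
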